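/- For r₀ ∈ (1/2, 1), ∫₀^{r₀} (-log r)^{-1/2} (1-r²)^{-1} dr ≤ C (1-r₀)^{-1/2} for an absolute constant C. -/
import Mathlib

open Real MeasureTheory

theorem log_weight_integral_bound :
    ∃ C : ℝ, 0 < C ∧ ∀ r₀ : ℝ, r₀ ∈ Set.Ioo (1/2 : ℝ) 1 →
      ∫ r in Set.Ioo (0:ℝ) r₀, (-Real.log r) ^ (-(1/2) : ℝ) * (1 - r^2)⁻¹
        ≤ C * (1 - r₀) ^ (-(1/2) : ℝ) := by
  refine ⟨2, by norm_num, fun r₀ hr₀ => ?_⟩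
  obtain ⟨h1, h2⟩ := hr₀
  set g : ℝ → ℝ := fun r => 2 + (1 - r) ^ (-(3/2) : ℝ) with hg_def
  -- continuity / integrability of g
  have hgc : ContinuousOn g (Set.Icc 0 r₀) := by
    apply continuousOn_const.add
    apply ContinuousOn.rpow_const (by fun_prop)
    intro x hx
    left
    have := hx.2
    simp only [Set.mem_Icc] at hx
    have : x < 1 := lt_of_le_of_lt hx.2 h2
    intro hc; rw [sub_eq_zero] at hc; linarith
  have hg_int : IntegrableOn g (Set.Ioo 0 r₀) := by
    exact (hgc.integrableOn_Icc).mono_set Set.Ioo_subset_Icc_self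
  -- pointwise bound
  have h_le : ∀ r ∈ Set.Ioo (0:ℝ) r₀,
      (-Real.log r) ^ (-(1/2) : ℝ) * (1 - r^2)⁻¹ ≤ g r := by
    intro r hr
    obtain ⟨hr0, hrr⟩ := hr
    have hr1 : r < 1 := lt_trans hrr h2
    have h1r : 0 < 1 - r := by linarith
    have h1r2 : 0 < 1 - r^2 := by nlinarith
    rcases le_or_gt r (1/2) with hc | hc
    · -- small r : bound by 2
      have hlog2 : (0:ℝ) < Real.log 2 := Real.log_pos one_lt_two
      have hlr : Real.log r ≤ Real.log (2⁻¹) :=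
        Real.log_le_log hr0 (by linarith)
      rw [Real.log_inv] at hlr
      have hA : (-Real.log r) ^ (-(1/2) : ℝ) ≤ (Real.log 2) ^ (-(1/2) : ℝ) :=
        Real.rpow_le_rpow_of_nonpos hlog2 (by linarith) (by norm_num)
      have hA2 : (Real.log 2) ^ (-(1/2) : ℝ) ≤ (3/2 : ℝ) := by
        have h49 : ((4/9 : ℝ)) ^ (-(1/2) : ℝ) = 3/2 := by
          rw [show (4/9:ℝ) = ((3/2:ℝ)) ^ (-2 : ℝ) by
            rw [show (-2:ℝ) = ((-2:ℤ):ℝ) by norm_num, Real.rpow_intCast]; norm_num,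
            ← Real.rpow_mul (by norm_num)]
          norm_num
        calc (Real.log 2) ^ (-(1/2) : ℝ) ≤ ((4/9 : ℝ)) ^ (-(1/2) : ℝ) :=
              Real.rpow_le_rpow_of_nonpos (by norm_num)
                (by linarith [Real.log_two_gt_d9]) (by norm_num)
          _ = 3/2 := h49
      have hB : (1 - r^2)⁻¹ ≤ (4/3 : ℝ) := by
        have h34 : (3/4 : ℝ) ≤ 1 - r^2 := by nlinarith
        calc (1 - r^2)⁻¹ ≤ (3/4 : ℝ)⁻¹ := by
              apply inv_anti₀ (by norm_num) h34
          _ = 4/3 := by norm_num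
      have : (-Real.log r) ^ (-(1/2) : ℝ) * (1 - r^2)⁻¹ ≤ (3/2) * (4/3) := by
        apply mul_le_mul (le_trans hA hA2) hB (inv_nonneg.mpr h1r2.le) (by norm_num)
      have hnn : (0:ℝ) ≤ (1 - r) ^ (-(3/2) : ℝ) := Real.rpow_nonneg h1r.le _
      simp only [hg_def]
      linarith
    · -- large r : bound by (1-r)^(-3/2)
      have hlr : Real.log r ≤ r - 1 := Real.log_le_sub_one_of_pos hr0
      have hA : (-Real.log r) ^ (-(1/2) : ℝ) ≤ (1 - r) ^ (-(1/2) : ℝ) :=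
        Real.rpow_le_rpow_of_nonpos h1r (by linarith) (by norm_num)
      have hB : (1 - r^2)⁻¹ ≤ (1 - r)⁻¹ := by
        apply inv_anti₀ h1r (by nlinarith)
      have hmain : (-Real.log r) ^ (-(1/2) : ℝ) * (1 - r^2)⁻¹
          ≤ (1 - r) ^ (-(1/2) : ℝ) * (1 - r)⁻¹ :=
        mul_le_mul hA hB (inv_nonneg.mpr h1r2.le) (Real.rpow_nonneg h1r.le _)
      have heq : (1 - r) ^ (-(1/2) : ℝ) * (1 - r)⁻¹ = (1 - r) ^ (-(3/2) : ℝ) := by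
        rw [← Real.rpow_neg_one (1 - r), ← Real.rpow_add h1r]
        norm_num
      simp only [hg_def]
      rw [heq] at hmain
      linarith
  have h_nonneg : ∀ r ∈ Set.Ioo (0:ℝ) r₀,
      0 ≤ (-Real.log r) ^ (-(1/2) : ℝ) * (1 - r^2)⁻¹ := by
    intro r hr
    obtain ⟨hr0, hrr⟩ := hr
    have hr1 : r < 1 := lt_trans hrr h2
    apply mul_nonneg (Real.rpow_nonneg (by
      have := Real.log_nonpos hr0.le hr1.le; linarith) _)
    apply inv_nonneg.mpr; nlinarith
  -- compare integrals
  have step1 : (∫ r in Set.Ioo (0:ℝ) r₀, (-Real.log r) ^ (-(1/2) : ℝ) * (1 - r^2)⁻¹)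
      ≤ ∫ r in Set.Ioo (0:ℝ) r₀, g r := by
    apply integral_mono_of_nonneg
    · exact (ae_restrict_iff' measurableSet_Ioo).mpr (ae_of_all _ h_nonneg)
    · exact hg_int
    · exact (ae_restrict_iff' measurableSet_Ioo).mpr (ae_of_all _ h_le)
  -- compute ∫ g
  have hiic : IntervalIntegrable (fun r : ℝ => (1 - r) ^ (-(3/2) : ℝ)) volume 0 r₀ := by
    apply ContinuousOn.intervalIntegrable
    rw [Set.uIcc_of_le (by linarith)]
    apply ContinuousOn.rpow_const (by fun_prop)
    intro x hx
    left
    simp only [Set.mem_Icc] at hx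
    intro hce; rw [sub_eq_zero] at hce; linarith [hx.2]
  have step2 : (∫ r in Set.Ioo (0:ℝ) r₀, g r)
      = 2 * r₀ + (2 * (1 - r₀) ^ (-(1/2) : ℝ) - 2) := by
    rw [← integral_Ioc_eq_integral_Ioo, ← intervalIntegral.integral_of_le (by linarith)]
    rw [hg_def]
    rw [intervalIntegral.integral_add intervalIntegrable_const hiic]
    have key := intervalIntegral.integral_comp_sub_left (a := 0) (b := r₀)
      (fun x : ℝ => x ^ (-(3/2):ℝ)) 1
    simp only [sub_zero] at key
    have hval : ∫ r in (0:ℝ)..r₀, (1 - r) ^ (-(3/2) : ℝ)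
        = 2 * (1 - r₀) ^ (-(1/2):ℝ) - 2 := by
      rw [key, integral_rpow (Or.inr ⟨by norm_num, ?_⟩)]
      · rw [Real.one_rpow]
        have h32 : (-(3/2):ℝ) + 1 = -(1/2) := by norm_num
        rw [h32]; ring
      · rw [Set.uIcc_of_le (by linarith)]
        intro hcmem
        simp only [Set.mem_Icc] at hcmem
        linarith [hcmem.1]
    rw [hval, intervalIntegral.integral_const]
    simp only [sub_zero, smul_eq_mul]
    ring
  have h3 : (0:ℝ) < 1 - r₀ := by linarith
  have hfin : 2 * r₀ + (2 * (1 - r₀) ^ (-(1/2) : ℝ) - 2) ≤ 2 * (1 - r₀) ^ (-(1/2) : ℝ) := by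
    linarith
  linarith [step1, step2.le, step2.ge, hfin]
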